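/- Let K ∈ 𝓢(ℝⁿ) be a Schwartz function. For every ε > 0 there exists a compact neighborhood U of 0 in ℝⁿ such that ∫_{ℝⁿ} osc_U K(x) dx < ε, where osc_U K(x) = sup_{y∈U} |K(x) − K(x−y)|. -/

import Mathlib

open MeasureTheory Metric
open scoped ENNReal

/-- For a Schwartz function `K` on `ℝⁿ` and every `ε > 0` there is a compact
neighborhood `U` of `0` such that the `L¹`-norm of the oscillation
`osc_U K(x) = sup_{y ∈ U} |K(x) − K(x−y)|` is smaller than `ε`. -/
theorem osc_L1_small (n : ℕ) (K : SchwartzMap (EuclideanSpace ℝ (Fin n)) ℂ) :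
    ∀ ε : ℝ, 0 < ε →
      ∃ U : Set (EuclideanSpace ℝ (Fin n)), IsCompact U ∧
        U ∈ nhds (0 : EuclideanSpace ℝ (Fin n)) ∧
        (∫⁻ x, ⨆ y ∈ U, (‖K x - K (x - y)‖₊ : ℝ≥0∞)) < ENNReal.ofReal ε := by
  intro ε hε
  -- decay bound on fderiv
  obtain ⟨C, hC0, hC⟩ : ∃ C : ℝ, 0 ≤ C ∧ ∀ x,
      (1 + ‖x‖) ^ (n+1) * ‖fderiv ℝ (K : EuclideanSpace ℝ (Fin n) → ℂ) x‖ ≤ C := by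
    refine ⟨2 ^ (n+1) * (Finset.Iic ((n+1), 1)).sup
      (fun m => SchwartzMap.seminorm ℝ m.1 m.2) K, by positivity, fun x => ?_⟩
    have h := SchwartzMap.one_add_le_sup_seminorm_apply (𝕜 := ℝ) (m := ((n+1), 1)) le_rfl le_rfl K x
    rwa [← norm_iteratedFDeriv_fderiv, norm_iteratedFDeriv_zero] at h
  set C' : ℝ := 2 ^ (n+1) * C with hC'
  have hC'0 : 0 ≤ C' := by positivity
  -- the integral of the japanese bracket
  set I : ℝ≥0∞ := ∫⁻ x : EuclideanSpace ℝ (Fin n),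
      ENNReal.ofReal ((1 + ‖x‖) ^ (-((n:ℝ)+1))) with hI
  have hIfin : I < ∞ := by
    apply finite_integral_one_add_norm
    rw [finrank_euclideanSpace, Fintype.card_fin]
    exact lt_add_one _
  -- choose δ
  set δ : ℝ := min 1 (ε / ((C' + 1) * (I.toReal + 1))) with hδ
  have hIt0 : (0:ℝ) ≤ I.toReal := ENNReal.toReal_nonneg
  have hδ0 : 0 < δ := lt_min one_pos (by positivity)
  have hδ1 : δ ≤ 1 := min_le_left _ _
  refine ⟨closedBall 0 δ, isCompact_closedBall _ _, closedBall_mem_nhds _ hδ0, ?_⟩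
  -- pointwise bound on the oscillation
  have key : ∀ x : EuclideanSpace ℝ (Fin n), (⨆ y ∈ closedBall (0:EuclideanSpace ℝ (Fin n)) δ,
      (‖K x - K (x - y)‖₊ : ℝ≥0∞)) ≤
      ENNReal.ofReal (δ * C') * ENNReal.ofReal ((1 + ‖x‖) ^ (-((n:ℝ)+1))) := by
    intro x
    refine iSup₂_le fun y hy => ?_
    have hy' : ‖y‖ ≤ δ := by simpa using mem_closedBall_iff_norm.mp hy
    -- bound fderiv on closedBall x δ
    have hball : ∀ z ∈ closedBall x δ,
        ‖fderiv ℝ (K : EuclideanSpace ℝ (Fin n) → ℂ) z‖ ≤ C' * (1 + ‖x‖) ^ (-((n:ℝ)+1)) := by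
      intro z hz
      have hzx : ‖x‖ - 1 ≤ ‖z‖ := by
        have := mem_closedBall_iff_norm.mp hz
        have h1 : ‖x‖ - ‖z‖ ≤ ‖x - z‖ := norm_sub_norm_le _ _
        have h2 : ‖x - z‖ ≤ δ := by rwa [norm_sub_rev]
        linarith [h2.trans hδ1]
      have hhalf : (1 + ‖x‖) / 2 ≤ 1 + ‖z‖ := by
        rcases le_total (‖x‖) 1 with h | h
        · have : (0:ℝ) ≤ ‖z‖ := norm_nonneg _; linarith
        · linarith
      have hpos : (0:ℝ) < (1 + ‖x‖) / 2 := by positivity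
      have hpow : ((1 + ‖x‖) / 2) ^ (n+1) ≤ (1 + ‖z‖) ^ (n+1) :=
        pow_le_pow_left₀ hpos.le hhalf _
      have hz' := hC z
      have hfz : ‖fderiv ℝ (K : EuclideanSpace ℝ (Fin n) → ℂ) z‖ ≤ C / (1 + ‖z‖) ^ (n+1) := by
        rw [le_div_iff₀ (by positivity)]
        calc ‖fderiv ℝ (K : EuclideanSpace ℝ (Fin n) → ℂ) z‖ * (1 + ‖z‖) ^ (n+1)
            = (1 + ‖z‖) ^ (n+1) * ‖fderiv ℝ (K : EuclideanSpace ℝ (Fin n) → ℂ) z‖ := mul_comm _ _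
          _ ≤ C := hz'
      refine hfz.trans ?_
      rw [Real.rpow_neg (by positivity), hC']
      have hcast : (1 + ‖x‖) ^ ((n:ℝ)+1) = (1 + ‖x‖) ^ (n+1) := by
        rw [← Real.rpow_natCast (1 + ‖x‖) (n+1)]
        norm_num
      rw [hcast, mul_assoc]
      rw [div_le_iff₀ (by positivity)]
      have h2 : C * (1 + ‖x‖) ^ (n+1) ≤ C * (2 ^ (n+1) * (1 + ‖z‖) ^ (n+1)) := by
        apply mul_le_mul_of_nonneg_left _ hC0
        calc (1 + ‖x‖) ^ (n+1) = 2 ^ (n+1) * ((1 + ‖x‖)/2) ^ (n+1) := by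
              rw [div_pow, mul_div_cancel₀]; positivity
          _ ≤ 2 ^ (n+1) * (1 + ‖z‖) ^ (n+1) := by
              apply mul_le_mul_of_nonneg_left hpow (by positivity)
      calc C ≤ C * ((1 + ‖x‖) ^ (n+1) * ((1 + ‖x‖) ^ (n+1))⁻¹) := by
              rw [mul_inv_cancel₀ (by positivity), mul_one]
        _ = C * (1 + ‖x‖) ^ (n+1) * ((1 + ‖x‖) ^ (n+1))⁻¹ := by ring
        _ ≤ C * (2 ^ (n+1) * (1 + ‖z‖) ^ (n+1)) * ((1 + ‖x‖) ^ (n+1))⁻¹ := by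
              apply mul_le_mul_of_nonneg_right h2 (by positivity)
        _ = 2 ^ (n+1) * (C * ((1 + ‖x‖) ^ (n+1))⁻¹) * (1 + ‖z‖) ^ (n+1) := by ring
    -- mean value inequality
    have hmv : ‖K x - K (x - y)‖ ≤ C' * (1 + ‖x‖) ^ (-((n:ℝ)+1)) * ‖y‖ := by
      have hxy : x - y ∈ closedBall x δ := mem_closedBall_iff_norm.mpr (by simpa using hy')
      have h := (convex_closedBall x δ).norm_image_sub_le_of_norm_fderiv_le
        (fun z _ => K.differentiable.differentiableAt) hball
        (mem_closedBall_self hδ0.le) hxy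
      have he : x - y - x = -y := by abel
      rw [he, norm_neg] at h
      rw [norm_sub_rev]
      exact h
    have hb : ‖K x - K (x - y)‖ ≤ δ * C' * (1 + ‖x‖) ^ (-((n:ℝ)+1)) := by
      have h1 : C' * (1 + ‖x‖) ^ (-((n:ℝ)+1)) * ‖y‖ ≤ C' * (1 + ‖x‖) ^ (-((n:ℝ)+1)) * δ := by
        apply mul_le_mul_of_nonneg_left hy' (by positivity)
      calc ‖K x - K (x - y)‖ ≤ C' * (1 + ‖x‖) ^ (-((n:ℝ)+1)) * ‖y‖ := hmv
        _ ≤ C' * (1 + ‖x‖) ^ (-((n:ℝ)+1)) * δ := h1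
        _ = δ * C' * (1 + ‖x‖) ^ (-((n:ℝ)+1)) := by ring
    calc (‖K x - K (x - y)‖₊ : ℝ≥0∞) = ENNReal.ofReal ‖K x - K (x - y)‖ :=
          (ofReal_norm _).symm
      _ ≤ ENNReal.ofReal (δ * C' * (1 + ‖x‖) ^ (-((n:ℝ)+1))) := ENNReal.ofReal_le_ofReal hb
      _ = ENNReal.ofReal (δ * C') * ENNReal.ofReal ((1 + ‖x‖) ^ (-((n:ℝ)+1))) := by
          rw [ENNReal.ofReal_mul (by positivity)]
  calc (∫⁻ x, ⨆ y ∈ closedBall (0:EuclideanSpace ℝ (Fin n)) δ, (‖K x - K (x - y)‖₊ : ℝ≥0∞))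
      ≤ ∫⁻ x : EuclideanSpace ℝ (Fin n), ENNReal.ofReal (δ * C') *
        ENNReal.ofReal ((1 + ‖x‖) ^ (-((n:ℝ)+1))) := lintegral_mono key
    _ = ENNReal.ofReal (δ * C') * I :=
        lintegral_const_mul' _ _ ENNReal.ofReal_ne_top
    _ = ENNReal.ofReal (δ * C' * I.toReal) := by
        rw [← ENNReal.ofReal_toReal hIfin.ne, ← ENNReal.ofReal_mul (by positivity),
          ENNReal.ofReal_toReal hIfin.ne]
    _ < ENNReal.ofReal ε := by
        rw [ENNReal.ofReal_lt_ofReal_iff hε]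
        have hδ2 : δ ≤ ε / ((C' + 1) * (I.toReal + 1)) := min_le_right _ _
        have hD : (0:ℝ) < (C' + 1) * (I.toReal + 1) := by positivity
        have h3 : δ * ((C' + 1) * (I.toReal + 1)) ≤ ε := by
          rw [← le_div_iff₀ hD]; exact hδ2
        nlinarith [mul_pos hδ0 hD, hδ0.le, hC'0, hIt0]
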